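/- Let (a_n) be a strictly increasing sequence of positive integers with ∑ a_n^{-σ'} < ∞ for some real σ' > 0. Then for every complex s with Re(s) > σ' and every real 0 ≤ x < 1, ∑_{n=1}^∞ (a_n + x)^{-s} = ∑_{j=0}^∞ C(-s, j) (∑_{n=1}^∞ a_n^{-(s+j)}) x^j, with absolute convergence of all series. -/

import Mathlib

open Complex Filter Topology

/-- Generalized binomial coefficient `C(a, j) = a(a-1)⋯(a-j+1)/j!` for complex `a`. -/
noncomputable def cbinom (a : ℂ) (j : ℕ) : ℂ :=
  (∏ i ∈ Finset.range j, (a - i)) / (j.factorial : ℂ)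

lemma cbinom_zero (a : ℂ) : cbinom a 0 = 1 := by simp [cbinom]

lemma cbinom_succ (a : ℂ) (j : ℕ) :
    cbinom a (j + 1) = cbinom a j * (a - j) / (j + 1) := by
  simp only [cbinom, Finset.prod_range_succ, Nat.factorial_succ]
  push_cast
  rw [div_mul_eq_mul_div, div_div, mul_comm ((j:ℂ) + 1)]

lemma succ_mul_cbinom_succ (a : ℂ) (j : ℕ) :
    ((j : ℂ) + 1) * cbinom a (j + 1) = (a - j) * cbinom a j := by
  have h : ((j : ℂ) + 1) ≠ 0 := Nat.cast_add_one_ne_zero j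
  rw [cbinom_succ, mul_div_assoc']
  rw [mul_comm, mul_div_assoc, div_self h, mul_one, mul_comm]

lemma abs_cbinom_succ (a : ℂ) (j : ℕ) :
    ‖cbinom a (j + 1)‖
      = ‖cbinom a j‖ * ‖a - j‖ / ((j : ℝ) + 1) := by
  rw [cbinom_succ, norm_div, norm_mul]
  congr 1
  rw [show ((j:ℂ) + 1) = (((j:ℝ) + 1 : ℝ) : ℂ) by push_cast; ring, Complex.norm_real, Real.norm_eq_abs,
    _root_.abs_of_nonneg (by positivity)]

lemma summable_cbinom_aux (a : ℂ) {r : ℝ} (hr0 : 0 ≤ r) (hr1 : r < 1) :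
    Summable (fun j : ℕ => ((j : ℝ) + 1) * ‖cbinom a j‖ * r ^ j) := by
  set ρ : ℝ := (1 + r) / 2 with hρ
  have hρ1 : ρ < 1 := by rw [hρ]; linarith
  have hrρ : r < ρ := by rw [hρ]; linarith
  apply summable_of_ratio_norm_eventually_le hρ1
  have htend : Tendsto (fun j : ℕ =>
      r * (1 + 1 / ((j:ℝ) + 1)) * (1 + (‖a‖ - 1) * (1 / ((j:ℝ) + 1))))
      atTop (𝓝 r) := by
    have h0 : Tendsto (fun j : ℕ => 1 / ((j:ℝ) + 1)) atTop (𝓝 0) :=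
      tendsto_one_div_add_atTop_nhds_zero_nat
    have := ((tendsto_const_nhds (x := r)).mul
        ((tendsto_const_nhds (x := (1:ℝ))).add h0)).mul
        ((tendsto_const_nhds (x := (1:ℝ))).add ((tendsto_const_nhds (x := ‖a‖ - 1)).mul h0))
    simpa using this
  filter_upwards [htend.eventually (eventually_le_nhds hrρ)] with j hj
  have hj1 : (0:ℝ) < (j:ℝ) + 1 := by positivity
  have key : r * (1 + 1 / ((j:ℝ) + 1)) * (1 + (‖a‖ - 1) * (1 / ((j:ℝ) + 1)))
      = (((j:ℝ) + 2) * (‖a‖ + j) * r) / (((j:ℝ) + 1) * ((j:ℝ) + 1)) := by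
    field_simp; ring
  rw [key] at hj
  have habs : ‖a - j‖ ≤ ‖a‖ + j := by
    calc ‖a - j‖ ≤ ‖a‖ + ‖(j:ℂ)‖ := by
          simpa [sub_eq_add_neg] using norm_add_le a (-(j:ℂ))
    _ = ‖a‖ + j := by simp
  have hc : (0:ℝ) ≤ ‖cbinom a j‖ := norm_nonneg _
  have hrj : (0:ℝ) ≤ r ^ j := pow_nonneg hr0 j
  rw [Real.norm_eq_abs, Real.norm_eq_abs, _root_.abs_of_nonneg (by positivity),
    _root_.abs_of_nonneg (by positivity)]
  push_cast
  rw [abs_cbinom_succ]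
  have hQeq : ((j:ℝ) + 1 + 1) * (‖cbinom a j‖ * ‖a - j‖ / ((j:ℝ) + 1)) * r ^ (j + 1)
      = (((j:ℝ) + 2) * ‖a - j‖ * r) / (((j:ℝ) + 1) * ((j:ℝ) + 1))
        * (((j:ℝ) + 1) * ‖cbinom a j‖ * r ^ j) := by
    rw [pow_succ]; field_simp; ring
  rw [hQeq]
  have hQle : (((j:ℝ) + 2) * ‖a - j‖ * r) / (((j:ℝ) + 1) * ((j:ℝ) + 1)) ≤ ρ := by
    refine le_trans ?_ hj
    gcongr
  exact mul_le_mul_of_nonneg_right hQle (by positivity)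

lemma summable_cbinom_mul_pow (c : ℂ) {z : ℂ} (hz : ‖z‖ < 1) :
    Summable (fun j : ℕ => ‖cbinom c j * z ^ j‖) := by
  refine Summable.of_nonneg_of_le (fun j => norm_nonneg _) (fun j => ?_)
    (summable_cbinom_aux c (norm_nonneg z) hz)
  rw [norm_mul, norm_pow]
  have h1 : (1:ℝ) ≤ (j:ℝ) + 1 := by linarith [Nat.cast_nonneg (α:=ℝ) j]
  nlinarith [norm_nonneg (cbinom c j), pow_nonneg (norm_nonneg z) j,
    mul_le_mul_of_nonneg_right (mul_le_mul_of_nonneg_left h1 (norm_nonneg (cbinom c j)))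
      (pow_nonneg (norm_nonneg z) j)]

set_option maxHeartbeats 1000000 in
lemma binomial_hasSum (c : ℂ) {t : ℝ} (h0 : 0 ≤ t) (h1 : t < 1) :
    HasSum (fun j : ℕ => cbinom c j * (t:ℂ) ^ j) (((1 + t : ℝ) : ℂ) ^ c) := by
  set r : ℝ := (1 + t) / 2 with hr
  have hr0 : 0 < r := by rw [hr]; linarith
  have hr1 : r < 1 := by rw [hr]; linarith
  have htr : t < r := by rw [hr]; linarith
  set g : ℕ → ℝ → ℂ := fun j y => cbinom c j * (y:ℂ) ^ j with hg_def
  set g' : ℕ → ℝ → ℂ := fun j y => cbinom c j * ((j:ℂ) * (y:ℂ) ^ (j - 1)) with hg'_def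
  set u : ℕ → ℝ := fun j => ((j:ℝ) + 1) * ‖cbinom c j‖ * r ^ j / r with hu_def
  have hu : Summable u := (summable_cbinom_aux c hr0.le hr1).div_const r
  have hg : ∀ (j : ℕ) (y : ℝ), y ∈ Set.Ioo (-r) r → HasDerivAt (g j) (g' j y) y := by
    intro j y _
    exact ((hasDerivAt_pow j ((y:ℝ):ℂ)).comp_ofReal).const_mul (cbinom c j)
  have hg' : ∀ (j : ℕ) (y : ℝ), y ∈ Set.Ioo (-r) r → ‖g' j y‖ ≤ u j := by
    intro j y hy
    have hyr : |y| ≤ r := by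
      rw [abs_le]; exact ⟨hy.1.le, hy.2.le⟩
    simp only [hg'_def, hu_def, norm_mul, norm_pow, map_natCast,
      Complex.norm_natCast, Complex.norm_real, Real.norm_eq_abs]
    match j with
    | 0 => simp; positivity
    | (k+1) =>
      have h2 : |y| ^ k ≤ r ^ k := pow_le_pow_left₀ (abs_nonneg y) hyr k
      have : ‖cbinom c (k+1)‖ * (((k:ℝ)+1) * |y| ^ (k + 1 - 1))
          ≤ ((k:ℝ)+1+1) * ‖cbinom c (k+1)‖ * r ^ (k+1) / r := by
        rw [show (k + 1 - 1) = k from rfl, pow_succ, mul_div_assoc, mul_div_assoc,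
          div_self hr0.ne', mul_one]
        have := mul_le_mul_of_nonneg_left h2 (norm_nonneg (cbinom c (k+1)))
        nlinarith [norm_nonneg (cbinom c (k+1)), pow_nonneg (abs_nonneg y) k,
          pow_nonneg hr0.le k]
      simpa using this
  have hg0 : Summable (fun j => g j 0) := by
    apply summable_of_ne_finset_zero (s := {0})
    intro j hj
    have : j ≠ 0 := by simpa using hj
    simp [hg_def, zero_pow this]
  have h0mem : (0:ℝ) ∈ Set.Ioo (-r) r := by constructor <;> simp [hr0] <;> linarith
  set F : ℝ → ℂ := fun y => ∑' j, g j y with hF_def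
  have hsum : ∀ y ∈ Set.Ioo (-r) r, Summable (fun j => g j y) := by
    intro y hy
    exact summable_of_summable_hasDerivAt_of_isPreconnected hu isOpen_Ioo
      (convex_Ioo _ _).isPreconnected hg hg' h0mem hg0 hy
  have hF : ∀ y ∈ Set.Ioo (-r) r, HasDerivAt F (∑' j, g' j y) y := by
    intro y hy
    exact hasDerivAt_tsum_of_isPreconnected hu isOpen_Ioo
      (convex_Ioo _ _).isPreconnected hg hg' h0mem hg0 hy
  have hsum' : ∀ y ∈ Set.Ioo (-r) r, Summable (fun j => g' j y) := by
    intro y hy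
    exact Summable.of_norm (Summable.of_nonneg_of_le (fun j => norm_nonneg _)
      (fun j => hg' j y hy) hu)
  -- the ODE
  have hODE : ∀ y ∈ Set.Ioo (-r) r, (1 + (y:ℂ)) * (∑' j, g' j y) = c * F y := by
    intro y hy
    have hS' := hsum' y hy
    have hS := hsum y hy
    have e1 : ∀ j : ℕ, c * g j y - (y:ℂ) * g' j y = g' (j+1) y := by
      intro j
      have := succ_mul_cbinom_succ c j
      match j with
      | 0 =>
        simp only [hg_def, hg'_def]
        push_cast at this ⊢
        simp only [pow_zero, pow_one]
        linear_combination -this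
      | (k+1) =>
        simp only [hg_def, hg'_def, show k + 1 + 1 - 1 = k + 1 from rfl,
          show k + 1 - 1 = k from rfl]
        push_cast at this ⊢
        linear_combination -((y:ℂ))^(k+1) * this
    have lhs_eq : c * F y - (y:ℂ) * (∑' j, g' j y) = ∑' j, (c * g j y - (y:ℂ) * g' j y) := by
      rw [← tsum_mul_left, ← tsum_mul_left, ← Summable.tsum_sub (hS.mul_left c) (hS'.mul_left (y:ℂ))]
    have rhs_eq : (∑' j, (c * g j y - (y:ℂ) * g' j y)) = ∑' j, g' j y := by
      simp_rw [e1]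
      have := Summable.tsum_eq_zero_add hS'
      rw [this]
      simp [hg'_def]
    have h2 := lhs_eq.trans rhs_eq
    linear_combination -h2
  -- constancy of G
  set G : ℝ → ℂ := fun y => F y * (1 + (y:ℂ)) ^ (-c) with hG_def
  have hG' : ∀ y ∈ Set.Ioo (-r) r, HasDerivAt G 0 y := by
    intro y hy
    have hypos : 0 < 1 + y := by have := hy.1; simp only [neg_lt] at this; linarith [hr1]
    have hmem : (1 + (y:ℂ)) ∈ Complex.slitPlane := by
      rw [Complex.mem_slitPlane_iff]
      left; simpa using hypos
    have hne : (1 + (y:ℂ)) ≠ 0 := Complex.slitPlane_ne_zero hmem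
    have hP : HasDerivAt (fun w : ℝ => (1 + (w:ℂ)) ^ (-c))
        (-c * (1 + (y:ℂ)) ^ (-c - 1) * 1) y := by
      have inner : HasDerivAt (fun z : ℂ => (1 + z) ^ (-c))
          (-c * (1 + (y:ℂ)) ^ (-c - 1) * 1) (y:ℂ) :=
        ((hasDerivAt_id ((y:ℝ):ℂ)).const_add 1).cpow_const hmem
      exact inner.comp_ofReal
    have hprod := (hF y hy).mul hP
    have key : (∑' j, g' j y) * (1 + (y:ℂ)) ^ (-c) +
        F y * (-c * (1 + (y:ℂ)) ^ (-c - 1) * 1) = 0 := by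
      have hsplit : (1 + (y:ℂ)) ^ (-c) = (1 + (y:ℂ)) ^ (-c - 1) * (1 + (y:ℂ)) := by
        have h3 := Complex.cpow_add (-c - 1) 1 hne
        rw [Complex.cpow_one, show -c - 1 + 1 = -c by ring] at h3
        exact h3
      rw [hsplit]
      have := hODE y hy
      linear_combination ((1 + (y:ℂ)) ^ (-c - 1)) * this
    rw [key] at hprod
    exact hprod
  -- conclude G t = G 0
  have hsub : Set.Icc (0:ℝ) t ⊆ Set.Ioo (-r) r := by
    intro y hy
    exact ⟨by linarith [hy.1], by linarith [hy.2]⟩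
  have hcont : ContinuousOn G (Set.Icc 0 t) := by
    intro y hy
    exact (hG' y (hsub hy)).continuousAt.continuousWithinAt
  have hder : ∀ y ∈ Set.Ico (0:ℝ) t, HasDerivWithinAt G 0 (Set.Ici y) y := by
    intro y hy
    exact (hG' y (hsub ⟨hy.1, hy.2.le⟩)).hasDerivWithinAt
  have hGt : G t = G 0 :=
    constant_of_has_deriv_right_zero hcont hder t ⟨h0, le_refl t⟩
  have hG0 : G 0 = 1 := by
    simp only [hG_def, hF_def]
    rw [show ((0:ℝ):ℂ) = 0 from rfl]
    rw [tsum_eq_single 0 (by intro j hj; simp [hg_def, zero_pow hj])]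
    simp [hg_def, cbinom_zero]
  -- unpack
  have htmem : t ∈ Set.Ioo (-r) r := ⟨by linarith, htr⟩
  have hF_eq : F t = ((1 + t : ℝ) : ℂ) ^ c := by
    have := hGt.trans hG0
    simp only [hG_def] at this
    have hne : (1 + (t:ℂ)) ≠ 0 := by
      rw [show (1 + (t:ℂ)) = (((1+t : ℝ)):ℂ) by push_cast; ring]
      exact_mod_cast (by positivity : (1+t:ℝ) ≠ 0)
    rw [Complex.cpow_neg] at this
    have hpow_ne : (1 + (t:ℂ)) ^ c ≠ 0 := by
      intro h
      exact hne (Complex.cpow_eq_zero_iff _ _ |>.mp h).1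
    field_simp at this
    rw [show (((1+t : ℝ)):ℂ) = 1 + (t:ℂ) by push_cast; ring]
    exact this
  have := (hsum t htmem).hasSum
  rwa [show (∑' j, g j t) = F t from rfl, hF_eq] at this

set_option maxHeartbeats 1000000 in
theorem ramanujan_formula_hurwitz
    (a : ℕ → ℕ) (hmono : StrictMono a) (hpos : ∀ n, 0 < a n)
    (σ' : ℝ) (hσ' : 0 < σ')
    (hconv : Summable (fun n : ℕ => ((a (n + 1) : ℝ)) ^ (-σ')))
    (s : ℂ) (hs : σ' < s.re) (x : ℝ) (hx0 : 0 ≤ x) (hx1 : x < 1) :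
    (∀ j : ℕ, Summable (fun n : ℕ =>
        ‖((a (n + 1) : ℝ) : ℂ) ^ (-(s + (j : ℂ)))‖)) ∧
    Summable (fun j : ℕ => ‖cbinom (-s) j *
        (∑' n : ℕ, ((a (n + 1) : ℝ) : ℂ) ^ (-(s + (j : ℂ)))) * (x : ℂ) ^ j‖) ∧
    Summable (fun n : ℕ =>
        ‖(((a (n + 1) : ℝ) + x : ℝ) : ℂ) ^ (-s)‖) ∧
    ∑' n : ℕ, (((a (n + 1) : ℝ) + x : ℝ) : ℂ) ^ (-s) =
      ∑' j : ℕ, cbinom (-s) j *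
        (∑' n : ℕ, ((a (n + 1) : ℝ) : ℂ) ^ (-(s + (j : ℂ)))) * (x : ℂ) ^ j := by
  set b : ℕ → ℝ := fun n => (a (n + 1) : ℝ) with hb_def
  have hb1 : ∀ n, (1:ℝ) ≤ b n := fun n => by
    exact_mod_cast Nat.one_le_cast.mpr (hpos (n + 1))
  have hb0 : ∀ n, (0:ℝ) < b n := fun n => lt_of_lt_of_le one_pos (hb1 n)
  -- summability of b n ^ (-w) for σ' ≤ w
  have hsum_exp : ∀ w : ℝ, σ' ≤ w → Summable (fun n => b n ^ (-w)) := by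
    intro w hw
    refine hconv.of_nonneg_of_le (fun n => Real.rpow_nonneg (hb0 n).le _) (fun n => ?_)
    exact Real.rpow_le_rpow_of_exponent_le (hb1 n) (by linarith)
  -- abs of cpow
  have habs : ∀ (y : ℝ), 0 < y → ∀ (c : ℂ), ‖(y:ℂ) ^ c‖ = y ^ c.re := by
    intro y hy c
    exact Complex.norm_cpow_eq_rpow_re_of_pos hy c
  -- Part 1
  have part1 : ∀ j : ℕ, Summable (fun n : ℕ =>
      ‖(b n : ℂ) ^ (-(s + (j : ℂ)))‖) := by
    intro j
    have : ∀ n, ‖(b n : ℂ) ^ (-(s + (j : ℂ)))‖ = b n ^ (-(s.re + j)) := by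
      intro n
      rw [habs _ (hb0 n), show (-(s + (j:ℂ))).re = -(s.re + j) by simp]
    rw [funext this]
    exact hsum_exp _ (by have : (0:ℝ) ≤ j := Nat.cast_nonneg j; linarith)
  -- Part 3
  have part3 : Summable (fun n : ℕ =>
      ‖((b n + x : ℝ) : ℂ) ^ (-s)‖) := by
    have hterm : ∀ n, ‖((b n + x : ℝ) : ℂ) ^ (-s)‖ = (b n + x) ^ (-s.re) := by
      intro n
      rw [habs _ (by linarith [hb0 n])]
      simp
    rw [funext hterm]
    refine hconv.of_nonneg_of_le (fun n => Real.rpow_nonneg (by linarith [hb0 n]) _)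
      (fun n => ?_)
    calc (b n + x) ^ (-s.re) ≤ (b n) ^ (-s.re) :=
          Real.rpow_le_rpow_of_nonpos (hb0 n) (by linarith) (by linarith)
      _ ≤ b n ^ (-σ') := Real.rpow_le_rpow_of_exponent_le (hb1 n) (by linarith)
  -- the double-indexed family
  set f : ℕ → ℕ → ℂ := fun j n => cbinom (-s) j * (b n : ℂ) ^ (-(s + (j:ℂ))) * (x:ℂ) ^ j
    with hf_def
  have hxabs : ‖(x:ℂ)‖ < 1 := by rwa [Complex.norm_real, Real.norm_eq_abs, _root_.abs_of_nonneg hx0]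
  have hcb_sum : Summable (fun j => ‖cbinom (-s) j * (x:ℂ)^j‖) :=
    summable_cbinom_mul_pow (-s) hxabs
  have hS0 : Summable (fun n => b n ^ (-σ')) := hsum_exp σ' le_rfl
  -- norm of f
  have hfabs : ∀ j n, ‖f j n‖
      = ‖cbinom (-s) j * (x:ℂ)^j‖ * (b n ^ (-(s.re + j))) := by
    intro j n
    simp only [hf_def, norm_mul, habs _ (hb0 n)]
    rw [show (-(s + (j:ℂ))).re = -(s.re + j) by simp]
    ring
  have hfbound : ∀ j n, ‖f j n‖
      ≤ ‖cbinom (-s) j * (x:ℂ)^j‖ * (b n ^ (-σ')) := by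
    intro j n
    rw [hfabs j n]
    refine mul_le_mul_of_nonneg_left ?_ (norm_nonneg _)
    refine Real.rpow_le_rpow_of_exponent_le (hb1 n) ?_
    have : (0:ℝ) ≤ j := Nat.cast_nonneg j
    linarith
  -- summability on the product
  have hprod_norm : Summable (fun p : ℕ × ℕ => ‖f p.1 p.2‖) := by
    refine Summable.of_nonneg_of_le (fun p => norm_nonneg _)
      (fun p => hfbound p.1 p.2) ?_
    exact hcb_sum.mul_of_nonneg hS0 (fun j => norm_nonneg _)
      (fun n => Real.rpow_nonneg (hb0 n).le _)
  have hprod : Summable (Function.uncurry f) := by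
    refine Summable.of_norm ?_
    simpa [Function.uncurry] using hprod_norm
  -- per-n binomial expansion
  have hrow : ∀ n, HasSum (fun j => f j n) (((b n + x : ℝ) : ℂ) ^ (-s)) := by
    intro n
    have ht0 : (0:ℝ) ≤ x / b n := div_nonneg hx0 (hb0 n).le
    have ht1 : x / b n < 1 := by
      rw [div_lt_one (hb0 n)]; linarith [hb1 n]
    have hbin := (binomial_hasSum (-s) ht0 ht1).mul_left ((b n : ℂ) ^ (-s))
    have hbn_ne : ((b n : ℝ) : ℂ) ≠ 0 := by
      exact_mod_cast (hb0 n).ne'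
    have hterm : ∀ j, (b n : ℂ) ^ (-s) * (cbinom (-s) j * ((x / b n : ℝ):ℂ) ^ j)
        = f j n := by
      intro j
      have hpow : ((b n : ℂ)) ^ (-(s + (j:ℂ))) = (b n : ℂ) ^ (-s) * ((b n : ℂ) ^ j)⁻¹ := by
        rw [show -(s + (j:ℂ)) = -s + (-(j:ℂ)) by ring, Complex.cpow_add _ _ hbn_ne,
          Complex.cpow_neg ((b n : ℝ):ℂ) (j:ℂ), Complex.cpow_natCast]
      have hdiv : ((x / b n : ℝ):ℂ) ^ j = (x:ℂ)^j * ((b n : ℂ) ^ j)⁻¹ := by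
        push_cast
        rw [div_pow, div_eq_mul_inv]
      rw [hf_def]
      simp only
      rw [hpow, hdiv]
      ring
    have hsumval : (b n : ℂ) ^ (-s) * ((1 + x / b n : ℝ) : ℂ) ^ (-s)
        = ((b n + x : ℝ) : ℂ) ^ (-s) := by
      rw [← Complex.mul_cpow_ofReal_nonneg (hb0 n).le (by positivity)]
      congr 2
      push_cast
      field_simp
    rw [funext hterm, hsumval] at hbin
    exact hbin
  have hrow_tsum : ∀ n, ∑' j, f j n = ((b n + x : ℝ) : ℂ) ^ (-s) :=
    fun n => (hrow n).tsum_eq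
  -- Part 2
  have hcol_tsum : ∀ j, ∑' n, f j n
      = cbinom (-s) j * (∑' n, (b n : ℂ) ^ (-(s + (j:ℂ)))) * (x:ℂ) ^ j := by
    intro j
    calc ∑' n, f j n = ∑' n, cbinom (-s) j * ((b n : ℂ) ^ (-(s + (j:ℂ))) * (x:ℂ) ^ j) := by
          apply tsum_congr; intro n; rw [hf_def]; ring
      _ = cbinom (-s) j * ∑' n, ((b n : ℂ) ^ (-(s + (j:ℂ))) * (x:ℂ) ^ j) := tsum_mul_left
      _ = cbinom (-s) j * ((∑' n, (b n : ℂ) ^ (-(s + (j:ℂ)))) * (x:ℂ) ^ j) := by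
          rw [tsum_mul_right]
      _ = cbinom (-s) j * (∑' n, (b n : ℂ) ^ (-(s + (j:ℂ)))) * (x:ℂ) ^ j := by ring
  have part2 : Summable (fun j : ℕ => ‖cbinom (-s) j *
      (∑' n : ℕ, (b n : ℂ) ^ (-(s + (j : ℂ)))) * (x : ℂ) ^ j‖) := by
    refine Summable.of_nonneg_of_le (fun j => norm_nonneg _) (fun j => ?_)
      (hcb_sum.mul_right (∑' n, b n ^ (-σ')))
    rw [show cbinom (-s) j * (∑' n : ℕ, (b n : ℂ) ^ (-(s + (j : ℂ)))) * (x : ℂ) ^ j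
      = (cbinom (-s) j * (x:ℂ)^j) * (∑' n : ℕ, (b n : ℂ) ^ (-(s + (j : ℂ)))) by ring]
    rw [norm_mul]
    refine mul_le_mul_of_nonneg_left ?_ (norm_nonneg _)
    calc ‖∑' n : ℕ, (b n : ℂ) ^ (-(s + (j : ℂ)))‖
        ≤ ∑' n, ‖(b n : ℂ) ^ (-(s + (j : ℂ)))‖ := by
          have hn : Summable (fun n => ‖(b n : ℂ) ^ (-(s + (j:ℂ)))‖) := by
            exact part1 j
          exact norm_tsum_le_tsum_norm hn
      _ ≤ ∑' n, b n ^ (-σ') := by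
          refine Summable.tsum_le_tsum (fun n => ?_) (part1 j) hS0
          rw [habs _ (hb0 n), show (-(s + (j:ℂ))).re = -(s.re + j) by simp]
          refine Real.rpow_le_rpow_of_exponent_le (hb1 n) ?_
          have : (0:ℝ) ≤ j := Nat.cast_nonneg j
          linarith
  -- Part 4: the swap
  have part4 : ∑' n : ℕ, ((b n + x : ℝ) : ℂ) ^ (-s)
      = ∑' j : ℕ, cbinom (-s) j * (∑' n, (b n : ℂ) ^ (-(s + (j:ℂ)))) * (x:ℂ) ^ j := by
    calc ∑' n, ((b n + x : ℝ) : ℂ) ^ (-s) = ∑' n, ∑' j, f j n := by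
          exact tsum_congr fun n => (hrow_tsum n).symm
      _ = ∑' j, ∑' n, f j n := Summable.tsum_comm hprod
      _ = ∑' j, cbinom (-s) j * (∑' n, (b n : ℂ) ^ (-(s + (j:ℂ)))) * (x:ℂ) ^ j :=
          tsum_congr hcol_tsum
  exact ⟨part1, part2, part3, part4⟩
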